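/- Let u ∈ (0,∞)ⁿ with components linearly independent over ℚ, let ρ : ℝ → ℝ be 1 on [-1/2,1/2] and 0 outside [-1,1], and let p, q : ℝⁿ → ℝ be polynomials. If for all ε > 0, ∑_{k ∈ (ℤ≥0)ⁿ} p(k) ρ(ε⁻¹ u·(k+1/2)) = ∑_{k ∈ (ℤ≥0)ⁿ} q(k) ρ(ε⁻¹ u·(k+1/2)), then p(k) = q(k) for all k ∈ (ℤ≥0)ⁿ, hence p = q. -/

import Mathlib

open MvPolynomial

/-- A multivariate real polynomial vanishing on all nonnegative lattice points is zero. -/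
lemma mvpoly_eq_zero_of_eval_nat_eq_zero :
    ∀ {n : ℕ} (f : MvPolynomial (Fin n) ℝ),
      (∀ k : Fin n → ℕ, MvPolynomial.eval (fun j => (k j : ℝ)) f = 0) → f = 0 := by
  intro n
  induction n with
  | zero =>
    intro f hf
    rw [MvPolynomial.eq_C_of_isEmpty f]
    have h0 := hf (fun _ => 0)
    rw [MvPolynomial.eq_C_of_isEmpty f, MvPolynomial.eval_C] at h0
    rw [h0, map_zero]
  | succ n ih =>
    intro f hf
    apply (MvPolynomial.finSuccEquiv ℝ n).injective
    rw [map_zero]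
    refine Polynomial.ext fun m => ?_
    rw [Polynomial.coeff_zero]
    apply ih
    intro k
    have hpoly :
        Polynomial.map (MvPolynomial.eval fun j => (k j : ℝ))
          (MvPolynomial.finSuccEquiv ℝ n f) = 0 := by
      apply Polynomial.eq_zero_of_infinite_isRoot
      apply (Set.infinite_range_of_injective (f := fun m : ℕ => (m : ℝ))
        Nat.cast_injective).mono
      rintro _ ⟨m', rfl⟩
      show Polynomial.IsRoot _ _
      rw [Polynomial.IsRoot, ← MvPolynomial.eval_eq_eval_mv_eval']
      have hpt : (Fin.cons ((m' : ℕ) : ℝ) (fun j => (k j : ℝ)) : Fin (n + 1) → ℝ)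
          = fun j => (((Fin.cons m' k : Fin (n + 1) → ℕ) j : ℕ) : ℝ) := by
        funext j
        refine Fin.cases ?_ (fun i => ?_) j <;> simp
      rw [hpt]
      exact hf (Fin.cons m' k)
    rw [← Polynomial.coeff_map, hpoly, Polynomial.coeff_zero]

/-- finitely many lattice points below any energy bound -/
lemma finite_lattice_le {n : ℕ} (u : Fin n → ℝ) (hpos : ∀ j, 0 < u j) (C : ℝ) :
    {k : Fin n → ℕ | (∑ j, u j * ((k j : ℝ) + 1/2)) ≤ C}.Finite := by
  apply Set.Finite.subset
    (Set.Finite.pi (fun j => Set.finite_Iic (Nat.ceil (C / u j))))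
  intro k hk
  rw [Set.mem_pi]
  intro j _
  rw [Set.mem_Iic]
  have h1 : u j * (k j : ℝ) ≤ C := by
    calc u j * (k j : ℝ) ≤ u j * ((k j : ℝ) + 1/2) := by nlinarith [hpos j]
      _ ≤ ∑ j', u j' * ((k j' : ℝ) + 1/2) :=
          Finset.single_le_sum (f := fun j' => u j' * ((k j' : ℝ) + 1/2))
            (fun i _ => le_of_lt (mul_pos (hpos i) (by positivity))) (Finset.mem_univ j)
      _ ≤ C := hk
  have h2 : (k j : ℝ) ≤ C / u j := by
    rw [le_div_iff₀ (hpos j), mul_comm]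
    exact h1
  exact_mod_cast h2.trans (Nat.le_ceil _)

lemma E_injective {n : ℕ} (u : Fin n → ℝ)
    (hu : ∀ α : Fin n → ℤ, (∑ j, (α j : ℝ) * u j) = 0 → α = 0) :
    Function.Injective (fun k : Fin n → ℕ => ∑ j, u j * ((k j : ℝ) + 1/2)) := by
  intro a b hab
  have h0 : ∑ j, (((a j : ℤ) - (b j : ℤ) : ℤ) : ℝ) * u j = 0 := by
    have hs : (∑ j, u j * ((a j : ℝ) + 1/2)) - (∑ j, u j * ((b j : ℝ) + 1/2)) = 0 :=
      sub_eq_zero.mpr hab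
    rw [← Finset.sum_sub_distrib] at hs
    rw [← hs]
    refine Finset.sum_congr rfl fun j _ => by push_cast; ring
  have hα := hu _ h0
  funext j
  have hj := congrFun hα j
  simp only [Pi.zero_apply, sub_eq_zero] at hj
  exact_mod_cast hj

/-- Key recovery lemma: if all cutoff sums of `g` vanish, then `g` vanishes. -/
lemma key_recovery {n : ℕ} (hn : 0 < n) (u : Fin n → ℝ) (hpos : ∀ j, 0 < u j)
    (hu : ∀ α : Fin n → ℤ, (∑ j, (α j : ℝ) * u j) = 0 → α = 0)
    (ρ : ℝ → ℝ) (hρ1 : ∀ x ∈ Set.Icc (-(1:ℝ)/2) (1/2), ρ x = 1)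
    (hρ0 : ∀ x : ℝ, x ∉ Set.Icc (-1 : ℝ) 1 → ρ x = 0)
    (g : (Fin n → ℕ) → ℝ)
    (hsum : ∀ ε > (0:ℝ),
      ∑' k : Fin n → ℕ, g k * ρ (ε⁻¹ * ∑ j, u j * ((k j : ℝ) + 1/2)) = 0) :
    ∀ k, g k = 0 := by
  set E : (Fin n → ℕ) → ℝ := fun k => ∑ j, u j * ((k j : ℝ) + 1/2) with hE
  have hne : Nonempty (Fin n) := Fin.pos_iff_nonempty.mp hn
  have hEpos : ∀ k, 0 < E k := fun k =>
    Finset.sum_pos (fun j _ => mul_pos (hpos j) (by positivity)) Finset.univ_nonempty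
  have hfin : ∀ C : ℝ, {k : Fin n → ℕ | E k ≤ C}.Finite :=
    fun C => finite_lattice_le u hpos C
  have hEinj : Function.Injective E := E_injective u hu
  have claim : ∀ ε > (0:ℝ), ∑ k ∈ (hfin ε).toFinset, g k * ρ (ε⁻¹ * E k) = 0 := by
    intro ε hε
    have hv : ∀ k ∉ (hfin ε).toFinset, g k * ρ (ε⁻¹ * E k) = 0 := by
      intro k hk
      have hEk : ε < E k := lt_of_not_ge (by simpa [Set.Finite.mem_toFinset] using hk)
      have h1 : 1 < ε⁻¹ * E k := by
        have := mul_lt_mul_of_pos_left hEk (inv_pos.mpr hε)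
        rwa [inv_mul_cancel₀ (ne_of_gt hε)] at this
      rw [hρ0 _ (fun hx => absurd hx.2 (not_le.mpr h1)), mul_zero]
    rw [← tsum_eq_sum (L := SummationFilter.unconditional _) hv]
    exact hsum ε hε
  by_contra hcon
  push_neg at hcon
  obtain ⟨k₁, hk₁⟩ := hcon
  obtain ⟨k₀, hk₀S, hk₀min⟩ := Finset.exists_min_image
    ((hfin (E k₁)).toFinset.filter (fun k => g k ≠ 0)) E
    ⟨k₁, by simp [Set.Finite.mem_toFinset, hk₁]⟩
  have hk₀g : g k₀ ≠ 0 := (Finset.mem_filter.mp hk₀S).2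
  have hmin : ∀ k, g k ≠ 0 → E k₀ ≤ E k := by
    intro k hk
    by_cases hle : E k ≤ E k₁
    · exact hk₀min k (by simp [Set.Finite.mem_toFinset, hk, hle])
    · exact le_trans (hk₀min k₁ (by simp [Set.Finite.mem_toFinset, hk₁])) (le_of_not_ge hle)
  set v := E k₀ with hv'
  have hv : 0 < v := hEpos k₀
  set T : Set ℝ := insert (1/2 : ℝ) {x | x ∈ Set.Ioc (1/2 : ℝ) 1 ∧ ρ x ≠ 0} with hT
  have hTne : T.Nonempty := ⟨1/2, Set.mem_insert _ _⟩
  have hTbdd : BddAbove T := by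
    refine ⟨1, ?_⟩
    rintro x (rfl | ⟨hx, _⟩)
    · norm_num
    · exact hx.2
  have hmemT : ∀ x ∈ T, ρ x ≠ 0 ∧ 1/2 ≤ x := by
    rintro x (rfl | ⟨hx1, hx2⟩)
    · refine ⟨?_, le_refl _⟩
      rw [hρ1 (1/2) ⟨by norm_num, by norm_num⟩]
      norm_num
    · exact ⟨hx2, le_of_lt hx1.1⟩
  set s := sSup T with hs'
  have hs_half : 1/2 ≤ s := le_csSup hTbdd (Set.mem_insert _ _)
  have hs_pos : 0 < s := lt_of_lt_of_le (by norm_num) hs_half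
  have hs_le1 : s ≤ 1 := by
    apply csSup_le hTne
    rintro x (rfl | ⟨hx, _⟩)
    · norm_num
    · exact hx.2
  have hρ_above : ∀ y : ℝ, s < y → ρ y = 0 := by
    intro y hy
    by_cases hy1 : y ≤ 1
    · by_contra hρy
      exact absurd
        (le_csSup hTbdd (Set.mem_insert_of_mem _ ⟨⟨lt_of_le_of_lt hs_half hy, hy1⟩, hρy⟩))
        (not_le.mpr hy)
    · exact hρ0 y (fun hx => hy1 hx.2)
  set W : Finset (Fin n → ℕ) :=
    (hfin (2 * v)).toFinset.filter (fun k => g k ≠ 0 ∧ k ≠ k₀) with hW'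
  have hxex : ∃ x ∈ T, ∀ k ∈ W, s * v < x * E k := by
    by_cases hW : W.Nonempty
    · obtain ⟨km, hkmW, hkmmin⟩ := Finset.exists_min_image W E hW
      obtain ⟨hgkm, hkmne⟩ := (Finset.mem_filter.mp hkmW).2
      have hvkm : v < E km :=
        lt_of_le_of_ne (hmin km hgkm) (fun he => hkmne (hEinj he.symm))
      have hkm_pos : 0 < E km := lt_trans hv hvkm
      have ht : s * v / E km < s := by
        rw [div_lt_iff₀ hkm_pos]
        have := mul_lt_mul_of_pos_left hvkm hs_pos
        linarith
      obtain ⟨x, hxT, hxt⟩ := exists_lt_of_lt_csSup hTne ht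
      refine ⟨x, hxT, fun k hk => ?_⟩
      have hxpos : 0 < x := lt_of_lt_of_le (by norm_num) (hmemT x hxT).2
      have h1 : s * v < x * E km := by
        rw [div_lt_iff₀ hkm_pos] at hxt
        linarith
      exact lt_of_lt_of_le h1 (mul_le_mul_of_nonneg_left (hkmmin k hk) (le_of_lt hxpos))
    · exact ⟨1/2, Set.mem_insert _ _, fun k hk => absurd ⟨k, hk⟩ hW⟩
  obtain ⟨x, hxT, hxW⟩ := hxex
  obtain ⟨hxρ, hx_half⟩ := hmemT x hxT
  have hx_pos : 0 < x := lt_of_lt_of_le (by norm_num) hx_half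
  have hx_le_s : x ≤ s := le_csSup hTbdd hxT
  have hε : 0 < v / x := div_pos hv hx_pos
  have hinv : (v / x)⁻¹ = x / v := inv_div v x
  have hsum0 := claim (v / x) hε
  have hterm : ∀ b ∈ (hfin (v / x)).toFinset, b ≠ k₀ →
      g b * ρ ((v / x)⁻¹ * E b) = 0 := by
    intro b _ hbne
    by_cases hgb : g b = 0
    · rw [hgb, zero_mul]
    · have hρb : ρ ((v / x)⁻¹ * E b) = 0 := by
        apply hρ_above
        rw [hinv, div_mul_eq_mul_div, lt_div_iff₀ hv]
        by_cases hb2 : E b ≤ 2 * v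
        · have hbW : b ∈ W := Finset.mem_filter.mpr
            ⟨(hfin (2 * v)).mem_toFinset.mpr hb2, hgb, hbne⟩
          exact hxW b hbW
        · have hEb : 2 * v < E b := lt_of_not_ge hb2
          nlinarith [mul_lt_mul_of_pos_left hEb hx_pos,
            mul_le_mul_of_nonneg_right hs_le1 (le_of_lt hv)]
      rw [hρb, mul_zero]
  have hk₀F : k₀ ∈ (hfin (v / x)).toFinset := by
    apply (hfin (v / x)).mem_toFinset.mpr
    show E k₀ ≤ v / x
    rw [le_div_iff₀ hx_pos, ← hv']
    nlinarith
  rw [Finset.sum_eq_single k₀ hterm (fun hk => absurd hk₀F hk)] at hsum0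
  have hx_eq : (v / x)⁻¹ * E k₀ = x := by
    rw [hinv, ← hv', div_mul_cancel₀ x (ne_of_gt hv)]
  rw [hx_eq] at hsum0
  rcases mul_eq_zero.mp hsum0 with h | h
  · exact hk₀g h
  · exact hxρ h

theorem polynomial_recovery_from_cutoff_sums (n : ℕ) (u : Fin n → ℝ)
    (hpos : ∀ j, 0 < u j)
    (hu : ∀ α : Fin n → ℤ, (∑ j, (α j : ℝ) * u j) = 0 → α = 0)
    (ρ : ℝ → ℝ) (hρ1 : ∀ x ∈ Set.Icc (-(1:ℝ)/2) (1/2), ρ x = 1)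
    (hρ0 : ∀ x : ℝ, x ∉ Set.Icc (-1 : ℝ) 1 → ρ x = 0)
    (p q : MvPolynomial (Fin n) ℝ)
    (h : ∀ ε > (0:ℝ),
      (∑' k : Fin n → ℕ,
          MvPolynomial.eval (fun j => (k j : ℝ)) p *
            ρ (ε⁻¹ * ∑ j, u j * ((k j : ℝ) + 1/2)))
        = ∑' k : Fin n → ℕ,
            MvPolynomial.eval (fun j => (k j : ℝ)) q *
              ρ (ε⁻¹ * ∑ j, u j * ((k j : ℝ) + 1/2))) :
    (∀ k : Fin n → ℕ,
        MvPolynomial.eval (fun j => (k j : ℝ)) p =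
          MvPolynomial.eval (fun j => (k j : ℝ)) q) ∧ p = q := by
  have hlat : ∀ k : Fin n → ℕ,
      MvPolynomial.eval (fun j => (k j : ℝ)) p =
        MvPolynomial.eval (fun j => (k j : ℝ)) q := by
    rcases Nat.eq_zero_or_pos n with hn | hn
    · subst hn
      intro k
      have h1 := h 1 one_pos
      rw [tsum_eq_single k (fun b hb => absurd (Subsingleton.elim b k) hb),
        tsum_eq_single k (fun b hb => absurd (Subsingleton.elim b k) hb)] at h1
      have hval : (1:ℝ)⁻¹ * ∑ j : Fin 0, u j * ((k j : ℝ) + 1/2) = 0 := by simp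
      rw [hval, hρ1 0 ⟨by norm_num, by norm_num⟩, mul_one, mul_one] at h1
      exact h1
    · intro k
      have hk := key_recovery hn u hpos hu ρ hρ1 hρ0
        (fun k => MvPolynomial.eval (fun j => (k j : ℝ)) p -
          MvPolynomial.eval (fun j => (k j : ℝ)) q) ?_ k
      · exact sub_eq_zero.mp hk
      · intro ε hε
        have hfin := finite_lattice_le u hpos ε
        have hvan : ∀ (c : (Fin n → ℕ) → ℝ), ∀ k ∉ hfin.toFinset,
            c k * ρ (ε⁻¹ * ∑ j, u j * ((k j : ℝ) + 1/2)) = 0 := by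
          intro c k hk
          have hEk : ε < ∑ j, u j * ((k j : ℝ) + 1/2) :=
            lt_of_not_ge (by simpa [Set.Finite.mem_toFinset] using hk)
          have h1 : 1 < ε⁻¹ * ∑ j, u j * ((k j : ℝ) + 1/2) := by
            have := mul_lt_mul_of_pos_left hEk (inv_pos.mpr hε)
            rwa [inv_mul_cancel₀ (ne_of_gt hε)] at this
          rw [hρ0 _ (fun hx => absurd hx.2 (not_le.mpr h1)), mul_zero]
        rw [tsum_eq_sum (hvan _)]
        have h1 := h ε hε
        rw [tsum_eq_sum (hvan _), tsum_eq_sum (hvan _)] at h1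
        calc ∑ k ∈ hfin.toFinset,
              (MvPolynomial.eval (fun j => (k j : ℝ)) p -
                MvPolynomial.eval (fun j => (k j : ℝ)) q) *
                ρ (ε⁻¹ * ∑ j, u j * ((k j : ℝ) + 1/2))
            = (∑ k ∈ hfin.toFinset, MvPolynomial.eval (fun j => (k j : ℝ)) p *
                ρ (ε⁻¹ * ∑ j, u j * ((k j : ℝ) + 1/2))) -
              ∑ k ∈ hfin.toFinset, MvPolynomial.eval (fun j => (k j : ℝ)) q *
                ρ (ε⁻¹ * ∑ j, u j * ((k j : ℝ) + 1/2)) := by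
              rw [← Finset.sum_sub_distrib]
              exact Finset.sum_congr rfl fun k _ => sub_mul _ _ _
          _ = 0 := by rw [h1, sub_self]
  refine ⟨hlat, ?_⟩
  have hz : p - q = 0 := by
    apply mvpoly_eq_zero_of_eval_nat_eq_zero
    intro k
    rw [map_sub]
    exact sub_eq_zero.mpr (hlat k)
  exact sub_eq_zero.mp hz
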